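/- Let m ≥ 1 and let a₁, …, a_m be positive real numbers such that aⱼ/aₖ is irrational whenever j ≠ k. Define Aⱼ = { ∑_{k=1}^m ⌊n·aⱼ/aₖ⌋ : n ∈ ℕ, n ≥ 1 }. Then A₁ ∪ ⋯ ∪ A_m equals the set of all positive integers. -/

import Mathlib

open Finset

noncomputable def tamuraT (m : ℕ) (a : Fin m → ℝ) (x : ℝ) : Finset (Fin m × ℕ) :=
  Finset.univ.biUnion fun k => (Finset.Icc 1 ⌊x / a k⌋₊).image fun t => (k, t)

lemma tamura_memT (m : ℕ) (a : Fin m → ℝ) (ha : ∀ i, 0 < a i) (x : ℝ) (hx : 0 ≤ x)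
    (p : Fin m × ℕ) :
    p ∈ tamuraT m a x ↔ 1 ≤ p.2 ∧ (p.2 : ℝ) * a p.1 ≤ x := by
  obtain ⟨k, t⟩ := p
  simp only [tamuraT, Finset.mem_biUnion, Finset.mem_image, Finset.mem_Icc, Finset.mem_univ,
    true_and, Prod.mk.injEq]
  constructor
  · rintro ⟨k', t', ⟨h1, h2⟩, rfl, rfl⟩
    refine ⟨h1, ?_⟩
    have := (Nat.le_floor_iff (div_nonneg hx (ha k').le)).mp h2
    rwa [le_div_iff₀ (ha k')] at this
  · rintro ⟨h1, h2⟩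
    exact ⟨k, t, ⟨h1, (Nat.le_floor_iff (div_nonneg hx (ha k).le)).mpr
      ((le_div_iff₀ (ha k)).mpr h2)⟩, rfl, rfl⟩

lemma tamura_cardT (m : ℕ) (a : Fin m → ℝ) (x : ℝ) :
    (tamuraT m a x).card = ∑ k, ⌊x / a k⌋₊ := by
  rw [tamuraT, Finset.card_biUnion]
  · refine Finset.sum_congr rfl fun k _ => ?_
    rw [Finset.card_image_of_injective _ (fun t s h => (Prod.mk.injEq _ _ _ _).mp h |>.2),
      Nat.card_Icc]
    omega
  · intro i _ j _ hij
    simp only [Finset.disjoint_left, Finset.mem_image]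
    rintro p ⟨t, _, rfl⟩ ⟨s, _, h⟩
    exact hij ((Prod.mk.injEq _ _ _ _).mp h).1.symm

lemma tamura_inj (m : ℕ) (a : Fin m → ℝ) (ha : ∀ i, 0 < a i)
    (hirr : ∀ j k : Fin m, j ≠ k → Irrational (a j / a k))
    (p q : Fin m × ℕ) (hp : 1 ≤ p.2) (hq : 1 ≤ q.2)
    (h : (p.2 : ℝ) * a p.1 = (q.2 : ℝ) * a q.1) : p = q := by
  obtain ⟨k, t⟩ := p; obtain ⟨j, s⟩ := q
  simp only at h hp hq
  by_cases hkj : k = j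
  · subst hkj
    have ht : (t : ℝ) = s := mul_right_cancel₀ (ha k).ne' h
    have : t = s := Nat.cast_injective ht
    simp [this]
  · exfalso
    have ht : (0:ℝ) < t := by exact_mod_cast hp
    have hd : a k / a j = (s : ℝ) / t := by
      rw [div_eq_div_iff (ha j).ne' ht.ne']
      linarith [h]
    exact (hirr k j hkj) ⟨(s / t : ℚ), by push_cast; rw [hd]⟩

lemma tamura_sum_eq_card (m : ℕ) (a : Fin m → ℝ) (ha : ∀ i, 0 < a i)
    (j : Fin m) (n : ℕ) :
    ∑ k, ⌊(n : ℝ) * a j / a k⌋ = ((tamuraT m a ((n : ℝ) * a j)).card : ℤ) := by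
  rw [tamura_cardT]
  push_cast
  refine Finset.sum_congr rfl fun k _ => ?_
  rw [Int.natCast_floor_eq_floor]
  have h1 := ha j; have h2 := ha k
  positivity

lemma tamura_surj (m : ℕ) (hm : 1 ≤ m) (a : Fin m → ℝ) (ha : ∀ i, 0 < a i)
    (hirr : ∀ j k : Fin m, j ≠ k → Irrational (a j / a k)) :
    ∀ l : ℕ, 1 ≤ l → ∃ p : Fin m × ℕ, 1 ≤ p.2 ∧
      (tamuraT m a ((p.2 : ℝ) * a p.1)).card = l := by
  have j0 : Fin m := ⟨0, hm⟩
  have epos : ∀ p : Fin m × ℕ, 1 ≤ p.2 → (0:ℝ) < (p.2 : ℝ) * a p.1 := by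
    intro p hp
    have : (0:ℝ) < (p.2 : ℝ) := by exact_mod_cast hp
    exact mul_pos this (ha p.1)
  intro l hl
  induction l, hl using Nat.le_induction with
  | base =>
    -- minimum element has rank 1
    have hp0 : ((j0, 1) : Fin m × ℕ) ∈ tamuraT m a ((1 : ℝ) * a j0) := by
      rw [tamura_memT m a ha _ (by have := ha j0; nlinarith) ]
      simp
    obtain ⟨p, hpmem, hpmin⟩ := Finset.exists_min_image _ (fun q => (q.2 : ℝ) * a q.1)
      ⟨_, hp0⟩
    rw [tamura_memT m a ha _ (by have := ha j0; nlinarith)] at hpmem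
    refine ⟨p, hpmem.1, ?_⟩
    have hx : (0:ℝ) ≤ (p.2 : ℝ) * a p.1 := (epos p hpmem.1).le
    have : tamuraT m a ((p.2 : ℝ) * a p.1) = {p} := by
      ext q
      rw [tamura_memT m a ha _ hx, Finset.mem_singleton]
      constructor
      · rintro ⟨hq1, hq2⟩
        have hqmem : q ∈ tamuraT m a ((1 : ℝ) * a j0) := by
          rw [tamura_memT m a ha _ (by have := ha j0; nlinarith)]
          exact ⟨hq1, le_trans hq2 hpmem.2⟩
        have := hpmin q hqmem
        exact tamura_inj m a ha hirr q p hq1 hpmem.1 (le_antisymm hq2 this)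
      · rintro rfl
        exact ⟨hpmem.1, le_refl _⟩
    rw [this, Finset.card_singleton]
  | succ l hl ih =>
    obtain ⟨p, hp1, hpcard⟩ := ih
    set x := (p.2 : ℝ) * a p.1 with hxdef
    have hx0 : (0:ℝ) < x := epos p hp1
    -- find q0 with x < e q0
    set n0 : ℕ := ⌊x / a j0⌋₊ + 1 with hn0
    have hq0gt : x < (n0 : ℝ) * a j0 := by
      have h1 : x / a j0 < (n0 : ℝ) := by
        push_cast
        simpa [hn0] using Nat.lt_floor_add_one (R := ℝ) (x / a j0)
      rwa [div_lt_iff₀ (ha j0)] at h1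
    have hq0pos : (0:ℝ) < (n0 : ℝ) * a j0 := lt_trans hx0 hq0gt
    -- minimum of elements strictly above x, within T (n0 * a j0)
    set C : Finset (Fin m × ℕ) :=
      (tamuraT m a ((n0 : ℝ) * a j0)).filter (fun q => x < (q.2 : ℝ) * a q.1) with hC
    have hq0C : ((j0, n0) : Fin m × ℕ) ∈ C := by
      rw [hC, Finset.mem_filter, tamura_memT m a ha _ hq0pos.le]
      exact ⟨⟨Nat.le_add_left 1 _, le_refl _⟩, hq0gt⟩
    obtain ⟨q, hqC, hqmin⟩ := Finset.exists_min_image C (fun r => (r.2 : ℝ) * a r.1) ⟨_, hq0C⟩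
    rw [hC, Finset.mem_filter, tamura_memT m a ha _ hq0pos.le] at hqC
    obtain ⟨⟨hq1, hqle⟩, hqgt⟩ := hqC
    have hqx : (0:ℝ) ≤ (q.2 : ℝ) * a q.1 := (epos q hq1).le
    refine ⟨q, hq1, ?_⟩
    have hstep : tamuraT m a ((q.2 : ℝ) * a q.1) = insert q (tamuraT m a x) := by
      ext r
      rw [tamura_memT m a ha _ hqx, Finset.mem_insert, tamura_memT m a ha _ hx0.le]
      constructor
      · rintro ⟨hr1, hr2⟩
        by_cases hrx : (r.2 : ℝ) * a r.1 ≤ x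
        · exact Or.inr ⟨hr1, hrx⟩
        · push_neg at hrx
          have hrC : r ∈ C := by
            rw [hC, Finset.mem_filter, tamura_memT m a ha _ hq0pos.le]
            exact ⟨⟨hr1, le_trans hr2 hqle⟩, hrx⟩
          have := hqmin r hrC
          exact Or.inl (tamura_inj m a ha hirr r q hr1 hq1 (le_antisymm hr2 this))
      · rintro (rfl | ⟨hr1, hr2⟩)
        · exact ⟨hq1, le_refl _⟩
        · exact ⟨hr1, le_trans hr2 hqgt.le⟩
    have hqnot : q ∉ tamuraT m a x := by
      rw [tamura_memT m a ha _ hx0.le]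
      rintro ⟨_, h⟩
      exact absurd h (not_le.mpr hqgt)
    rw [hstep, Finset.card_insert_of_notMem hqnot, hpcard]

theorem tamura_cover (m : ℕ) (hm : 1 ≤ m) (a : Fin m → ℝ)
    (ha : ∀ i, 0 < a i)
    (hirr : ∀ j k : Fin m, j ≠ k → Irrational (a j / a k)) :
    (⋃ j : Fin m, {l : ℤ | ∃ n : ℕ, 0 < n ∧ ∑ k, ⌊(n : ℝ) * a j / a k⌋ = l})
      = {l : ℤ | 0 < l} := by
  ext l
  simp only [Set.mem_iUnion, Set.mem_setOf_eq]
  constructor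
  · rintro ⟨j, n, hn, rfl⟩
    rw [tamura_sum_eq_card m a ha]
    have hmem : ((j, n) : Fin m × ℕ) ∈ tamuraT m a ((n : ℝ) * a j) := by
      rw [tamura_memT m a ha _ (mul_nonneg (Nat.cast_nonneg n) (ha j).le)]
      exact ⟨hn, le_refl _⟩
    exact_mod_cast Finset.card_pos.mpr ⟨_, hmem⟩
  · intro hl
    obtain ⟨⟨j, n⟩, hn1, hcard⟩ := tamura_surj m hm a ha hirr l.toNat (by omega)
    refine ⟨j, n, hn1, ?_⟩
    rw [tamura_sum_eq_card m a ha, hcard]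
    omega
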